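/- Let n ≥ 2, fix V ∈ ℝ^{n×(n−1)} with Vᵀ·1 = 0 and Vᵀ V = I_{n−1}, and for symmetric C, D ∈ ℝ^{n×n} define OGW_lb(C,D) := (1/n²)·[ ‖C‖_F² + ‖D‖_F² − 2·Σ_{i=1}^{n−1} λᵢ↓(Vᵀ C V)·λᵢ↓(Vᵀ D V) − (4/n)·‖Vᵀ C 1‖·‖Vᵀ D 1‖ − (2/n²)·(1ᵀ C 1)(1ᵀ D 1) ]. Then for all symmetric C, D, E ∈ ℝ^{n×n}, √(OGW_lb(C,E)) ≤ √(OGW_lb(C,D)) + √(OGW_lb(D,E)). -/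

import Mathlib

open Matrix BigOperators

noncomputable section

/-- Squared Frobenius norm of a real matrix. -/
def frobSq {m n : ℕ} (A : Matrix (Fin m) (Fin n) ℝ) : ℝ := ∑ i, ∑ j, (A i j) ^ 2

/-- Euclidean norm of a real vector. -/
def vnorm {n : ℕ} (v : Fin n → ℝ) : ℝ := Real.sqrt (∑ i, (v i) ^ 2)

/-- Eigenvalues of a real symmetric (Hermitian) matrix, listed in descending order. -/
def eigDesc {n : ℕ} {A : Matrix (Fin n) (Fin n) ℝ} (hA : A.IsHermitian) : Fin n → ℝ :=
  fun i => (hA.eigenvalues ∘ Tuple.sort hA.eigenvalues) i.rev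

/-- Conjugating a real symmetric (Hermitian) matrix preserves symmetry. -/
theorem conjHerm {n m : ℕ} (V : Matrix (Fin n) (Fin m) ℝ) {C : Matrix (Fin n) (Fin n) ℝ}
    (hC : C.IsHermitian) : (Vᵀ * C * V).IsHermitian := by
  have h := Matrix.isHermitian_mul_mul_conjTranspose Vᵀ hC
  simpa using h


/-- The closed-form lower bound `OGW_lb` of the orthogonal Gromov-Wasserstein discrepancy. -/
def OGWlb {n : ℕ} (V : Matrix (Fin n) (Fin (n - 1)) ℝ)
    (C D : Matrix (Fin n) (Fin n) ℝ) (hC : C.IsHermitian) (hD : D.IsHermitian) : ℝ :=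
  (1 / (n : ℝ) ^ 2) * (frobSq C + frobSq D
    - 2 * ∑ i, eigDesc (conjHerm V hC) i * eigDesc (conjHerm V hD) i
    - (4 / (n : ℝ)) * vnorm ((Vᵀ * C) *ᵥ (fun _ => (1 : ℝ)))
        * vnorm ((Vᵀ * D) *ᵥ (fun _ => (1 : ℝ)))
    - (2 / (n : ℝ) ^ 2) * ((∑ i, ∑ j, C i j) * (∑ i, ∑ j, D i j)))


lemma vnorm_sq {n : ℕ} (v : Fin n → ℝ) : vnorm v ^ 2 = ∑ i, (v i) ^ 2 :=
  Real.sq_sqrt (by positivity)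

lemma frobSq_eq_trace {m n : ℕ} (A : Matrix (Fin m) (Fin n) ℝ) :
    frobSq A = (Aᵀ * A).trace := by
  simp only [frobSq, trace, diag, mul_apply, transpose_apply]
  rw [Finset.sum_comm]
  simp [sq]

lemma sum_sq_eigenvalues {m : ℕ} {A : Matrix (Fin m) (Fin m) ℝ} (hA : A.IsHermitian) :
    ∑ i, (hA.eigenvalues i) ^ 2 = frobSq A := by
  have hAt : Aᵀ = A := hA
  rw [frobSq_eq_trace, hAt]
  set U : Matrix (Fin m) (Fin m) ℝ := (hA.eigenvectorUnitary : Matrix (Fin m) (Fin m) ℝ) with hU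
  set D : Matrix (Fin m) (Fin m) ℝ := diagonal (RCLike.ofReal ∘ hA.eigenvalues) with hD
  have h : A = U * D * star U := hA.spectral_theorem
  have hsU : star U * U = 1 := by
    rw [hU]; exact (Matrix.mem_unitaryGroup_iff').mp hA.eigenvectorUnitary.2
  have key : A * A = U * (D * D) * star U := by
    rw [h]
    calc U * D * star U * (U * D * star U) = U * D * (star U * U) * D * star U := by
          noncomm_ring
      _ = U * (D * D) * star U := by rw [hsU]; noncomm_ring
  rw [key, trace_mul_cycle, ← mul_assoc, hsU, one_mul]
  simp [hD, diagonal_mul_diagonal, trace_diagonal, sq]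

lemma sum_eigDesc_comp {n : ℕ} {A : Matrix (Fin n) (Fin n) ℝ} (hA : A.IsHermitian)
    (f : ℝ → ℝ) : ∑ i, f (eigDesc hA i) = ∑ i, f (hA.eigenvalues i) := by
  calc ∑ i, f (eigDesc hA i)
      = ∑ i, f (hA.eigenvalues (((Fin.revPerm : Equiv.Perm (Fin n)).trans
          (Tuple.sort hA.eigenvalues)) i)) := rfl
    _ = ∑ i, f (hA.eigenvalues i) :=
        Equiv.sum_comp ((Fin.revPerm : Equiv.Perm (Fin n)).trans (Tuple.sort hA.eigenvalues))
          (fun i => f (hA.eigenvalues i))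
lemma frob_decomp {n : ℕ} (hn : 2 ≤ n) (V : Matrix (Fin n) (Fin (n-1)) ℝ)
    (hV1 : Vᵀ *ᵥ (fun _ => (1:ℝ)) = 0) (hV2 : Vᵀ * V = 1)
    (C : Matrix (Fin n) (Fin n) ℝ) (hC : C.IsHermitian) :
    frobSq C = frobSq (Vᵀ * C * V)
      + (2 / (n:ℝ)) * (∑ i, ((Vᵀ * C) *ᵥ (fun _ => (1:ℝ))) i ^ 2)
      + (1 / (n:ℝ)^2) * (∑ i, ∑ j, C i j) ^ 2 := by
  have hn0 : (n:ℝ) ≠ 0 := by positivity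
  have hCt : Cᵀ = C := hC
  set c : ℝ := Real.sqrt ((n:ℝ)⁻¹) with hc
  have hc2 : c ^ 2 = (n:ℝ)⁻¹ := Real.sq_sqrt (by positivity)
  set u : Matrix (Fin n) (Fin 1) ℝ := of (fun _ _ => c) with hu
  have hVsum : ∀ i, ∑ j, Vᵀ i j = 0 := by
    intro i
    have := congrFun hV1 i
    simpa [mulVec, dotProduct] using this
  have hVu : Vᵀ * u = 0 := by
    ext i j
    have h0 : ∑ k, V k i = 0 := by simpa using hVsum i
    simp [mul_apply, hu, ← Finset.sum_mul, h0]
  have huV : uᵀ * V = 0 := by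
    ext j i
    have : ∑ k, V k i = 0 := by simpa using hVsum i
    simp [mul_apply, hu, ← Finset.mul_sum, this]
  have huu : uᵀ * u = 1 := by
    ext i j
    have hij : i = j := Subsingleton.elim i j
    subst hij
    simp [mul_apply, hu, Matrix.one_apply_eq, Finset.sum_const, ← sq, hc2]
    field_simp
  have hPtP : fromRows Vᵀ uᵀ * fromCols V u = 1 := by
    rw [fromRows_mul_fromCols, hV2, hVu, huV, huu, fromBlocks_one]
  have e : Fin n ≃ Fin (n-1) ⊕ Fin 1 :=
    (finCongr (by omega : n = (n-1)+1)).trans finSumFinEquiv.symm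
  have hPPt : fromCols V u * fromRows Vᵀ uᵀ = 1 :=
    (fromCols_mul_fromRows_eq_one_comm e V u Vᵀ uᵀ).mpr hPtP
  have hone : V * Vᵀ + u * uᵀ = 1 := by
    rw [← fromCols_mul_fromRows]; exact hPPt
  -- abbreviations
  set P : Matrix (Fin n) (Fin n) ℝ := V * Vᵀ with hP
  set Q : Matrix (Fin n) (Fin n) ℝ := u * uᵀ with hQ
  have expand : (C * C).trace
      = (P*C*(P*C)).trace + (P*C*(Q*C)).trace + (Q*C*(P*C)).trace + (Q*C*(Q*C)).trace := by
    have h : C * C = P*C*(P*C) + P*C*(Q*C) + Q*C*(P*C) + Q*C*(Q*C) := by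
      have h1 : C * C = (P + Q) * C * ((P + Q) * C) := by rw [hone]; simp
      rw [h1]
      simp only [add_mul, mul_add]
      abel
    rw [h, trace_add, trace_add, trace_add]
  -- term 1
  set M : Matrix (Fin (n-1)) (Fin (n-1)) ℝ := Vᵀ * C * V with hM
  have hMt : Mᵀ = M := by
    rw [hM]; simp [transpose_mul, hCt, Matrix.mul_assoc]
  have T1 : (P*C*(P*C)).trace = frobSq M := by
    have h1 : P*C*(P*C) = V*(M*(Vᵀ*C)) := by rw [hP, hM]; simp [Matrix.mul_assoc]
    have h2 : M*(Vᵀ*C)*V = M * M := by rw [hM]; simp [Matrix.mul_assoc]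
    rw [h1, trace_mul_comm, h2, frobSq_eq_trace, hMt]
  -- term 2
  set w : Matrix (Fin (n-1)) (Fin 1) ℝ := Vᵀ*C*u with hw
  have hwt : wᵀ = uᵀ*(C*V) := by
    rw [hw]; simp [transpose_mul, hCt, Matrix.mul_assoc]
  have T2a : (P*C*(Q*C)).trace = (Q*C*(P*C)).trace := by
    rw [trace_mul_comm]
  have T2b : (P*C*(Q*C)).trace = (wᵀ*w).trace := by
    have h1 : P*C*(Q*C) = (V*(Vᵀ*C*u)) * (uᵀ*C) := by rw [hP, hQ]; simp [Matrix.mul_assoc]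
    rw [h1, trace_mul_comm, hwt, hw]
    congr 1
    simp [Matrix.mul_assoc]
  -- term 4
  set z : Matrix (Fin 1) (Fin 1) ℝ := uᵀ*C*u with hz
  have T4 : (Q*C*(Q*C)).trace = (z*z).trace := by
    have h1 : Q*C*(Q*C) = (u*(uᵀ*C*u))*(uᵀ*C) := by rw [hQ]; simp [Matrix.mul_assoc]
    rw [h1, trace_mul_comm, hz]
    congr 1
    simp [Matrix.mul_assoc]
  -- scalar values
  have hwval : ∀ i, w i 0 = c * ((Vᵀ * C) *ᵥ (fun _ => (1:ℝ))) i := by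
    intro i
    rw [hw, hu]
    simp only [mul_apply, of_apply, mulVec, dotProduct, mul_one]
    rw [Finset.mul_sum]
    exact Finset.sum_congr rfl fun k _ => mul_comm _ _
  have hwtr : (wᵀ*w).trace = (n:ℝ)⁻¹ * (∑ i, ((Vᵀ * C) *ᵥ (fun _ => (1:ℝ))) i ^ 2) := by
    rw [trace_fin_one]
    simp only [mul_apply, transpose_apply]
    rw [Finset.mul_sum]
    congr 1; funext i
    rw [hwval i, ← hc2]; ring
  have hzval : z 0 0 = (n:ℝ)⁻¹ * (∑ i, ∑ j, C i j) := by
    rw [hz, hu, ← hc2]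
    simp only [mul_apply, transpose_apply, of_apply]
    simp only [Finset.sum_mul, Finset.mul_sum]
    exact Finset.sum_comm.trans (Finset.sum_congr rfl fun i _ => Finset.sum_congr rfl fun j _ => by ring)
  have hztr : (z*z).trace = ((n:ℝ)⁻¹ * (∑ i, ∑ j, C i j)) ^ 2 := by
    rw [trace_fin_one, mul_apply]
    rw [show (Finset.univ : Finset (Fin 1)) = {0} from rfl, Finset.sum_singleton, hzval, sq]
  -- assemble
  have hfr : frobSq C = (C*C).trace := by rw [frobSq_eq_trace, hCt]
  rw [hfr, expand, T1, ← T2a, T2b, hwtr, T4, hztr, hM]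
  field_simp
  ring

lemma OGWlb_eq {n : ℕ} (hn : 2 ≤ n) (V : Matrix (Fin n) (Fin (n-1)) ℝ)
    (hV1 : Vᵀ *ᵥ (fun _ => (1:ℝ)) = 0) (hV2 : Vᵀ * V = 1)
    (C D : Matrix (Fin n) (Fin n) ℝ) (hC : C.IsHermitian) (hD : D.IsHermitian) :
    OGWlb V C D hC hD = (1 / (n:ℝ)^2) *
      ((∑ i, (eigDesc (conjHerm V hC) i - eigDesc (conjHerm V hD) i)^2)
      + (2/(n:ℝ)) * (vnorm ((Vᵀ*C) *ᵥ fun _ => (1:ℝ)) - vnorm ((Vᵀ*D) *ᵥ fun _ => (1:ℝ)))^2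
      + (1/(n:ℝ)^2) * ((∑ i, ∑ j, C i j) - (∑ i, ∑ j, D i j))^2) := by
  have dC := frob_decomp hn V hV1 hV2 C hC
  have dD := frob_decomp hn V hV1 hV2 D hD
  have eC2 : ∑ i, (eigDesc (conjHerm V hC) i)^2 = frobSq (Vᵀ*C*V) := by
    rw [sum_eigDesc_comp (conjHerm V hC) (fun x => x^2)]
    exact sum_sq_eigenvalues _
  have eD2 : ∑ i, (eigDesc (conjHerm V hD) i)^2 = frobSq (Vᵀ*D*V) := by
    rw [sum_eigDesc_comp (conjHerm V hD) (fun x => x^2)]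
    exact sum_sq_eigenvalues _
  have expand : ∑ i, (eigDesc (conjHerm V hC) i - eigDesc (conjHerm V hD) i)^2
      = ∑ i, (eigDesc (conjHerm V hC) i)^2
        - 2*∑ i, eigDesc (conjHerm V hC) i * eigDesc (conjHerm V hD) i
        + ∑ i, (eigDesc (conjHerm V hD) i)^2 := by
    have h : ∀ a b : ℝ, (a-b)^2 = a^2 - 2*(a*b) + b^2 := by intros; ring
    simp_rw [h]
    rw [Finset.sum_add_distrib, Finset.sum_sub_distrib, ← Finset.mul_sum]
  rw [OGWlb, dC, dD, ← vnorm_sq ((Vᵀ*C) *ᵥ fun _ => (1:ℝ)), ← vnorm_sq ((Vᵀ*D) *ᵥ fun _ => (1:ℝ)),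
    expand, eC2, eD2]
  ring

/-- The square root of `OGW_lb` satisfies the triangle inequality on symmetric matrices. -/
theorem OGWlb_sqrt_triangle (n : ℕ) (hn : 2 ≤ n)
    (V : Matrix (Fin n) (Fin (n - 1)) ℝ)
    (hV1 : Vᵀ *ᵥ (fun _ => (1 : ℝ)) = 0) (hV2 : Vᵀ * V = 1)
    (C D E : Matrix (Fin n) (Fin n) ℝ)
    (hC : C.IsHermitian) (hD : D.IsHermitian) (hE : E.IsHermitian) :
    Real.sqrt (OGWlb V C E hC hE)
      ≤ Real.sqrt (OGWlb V C D hC hD) + Real.sqrt (OGWlb V D E hD hE) := by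
  have hn0 : (0:ℝ) < n := by positivity
  -- the embedding
  let p : (X : Matrix (Fin n) (Fin n) ℝ) → X.IsHermitian → EuclideanSpace ℝ (Fin (n-1) ⊕ Fin 2) :=
    fun X hX => (WithLp.toLp 2 (Sum.elim (eigDesc (conjHerm V hX))
      ![Real.sqrt (2/(n:ℝ)) * vnorm ((Vᵀ*X) *ᵥ fun _ => (1:ℝ)),
        (1/(n:ℝ)) * (∑ i, ∑ j, X i j)]) : EuclideanSpace ℝ (Fin (n-1) ⊕ Fin 2))
  have hdist : ∀ (X Y : Matrix (Fin n) (Fin n) ℝ) (hX : X.IsHermitian) (hY : Y.IsHermitian),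
      Real.sqrt (OGWlb V X Y hX hY) = (1/(n:ℝ)) * dist (p X hX) (p Y hY) := by
    intro X Y hX hY
    rw [OGWlb_eq hn V hV1 hV2 X Y hX hY, EuclideanSpace.dist_eq]
    rw [Real.sqrt_mul (by positivity) _]
    have h1 : Real.sqrt (1/(n:ℝ)^2) = 1/(n:ℝ) := by
      rw [one_div, one_div, Real.sqrt_inv, Real.sqrt_sq hn0.le]
    rw [h1]
    congr 1
    rw [Fintype.sum_sum_type]
    simp only [p, PiLp.toLp_apply, Sum.elim_inl, Sum.elim_inr, Real.dist_eq, sq_abs, Fin.sum_univ_two,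
      Matrix.cons_val_zero, Matrix.cons_val_one, Matrix.head_cons]
    have e2 : (Real.sqrt (2/(n:ℝ)) * vnorm ((Vᵀ*X) *ᵥ fun _ => (1:ℝ))
          - Real.sqrt (2/(n:ℝ)) * vnorm ((Vᵀ*Y) *ᵥ fun _ => (1:ℝ)))^2
        = (2/(n:ℝ)) * (vnorm ((Vᵀ*X) *ᵥ fun _ => (1:ℝ)) - vnorm ((Vᵀ*Y) *ᵥ fun _ => (1:ℝ)))^2 := by
      rw [← mul_sub, mul_pow, Real.sq_sqrt (by positivity)]
    rw [e2]
    congr 1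
    ring
  rw [hdist C E hC hE, hdist C D hC hD, hdist D E hD hE, ← mul_add]
  have := dist_triangle (p C hC) (p D hD) (p E hE)
  gcongr

end
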